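/- Let a, b, c, m, ν, γ, r, δ, λ_h, λ_v be positive real numbers, let α ∈ (0,1], set A = ν^α + r^α + λ_h^α + δ^α and R_0 = √(a^{2α}·b·m·c/(λ_v^α·A)), and let J₀ be the 5×5 real matrix [[−λ_h^α, ν^α+δ^α, γ^α, 0, −a^α·b·m], [0, −A, 0, 0, a^α·b·m], [0, r^α, −(λ_h^α+γ^α), 0, 0], [0, −a^α·c, 0, −λ_v^α, 0], [0, a^α·c, 0, 0, −λ_v^α]]. If R_0 > 1, then the characteristic polynomial of J₀ has a real root z > 0; in particular this eigenvalue satisfies |arg(z)| = 0 < α·π/2, so the disease-free equilibrium is unstable. -/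

import Mathlib

open Polynomial

lemma charpoly_eval_eq_det {n : ℕ} (M : Matrix (Fin n) (Fin n) ℝ) (z : ℝ) :
    M.charpoly.eval z = ((Matrix.charmatrix M).map (Polynomial.evalRingHom z)).det := by
  rw [Matrix.charpoly, ← Polynomial.coe_evalRingHom, RingHom.map_det, RingHom.mapMatrix_apply]

set_option maxHeartbeats 4000000 in
set_option maxRecDepth 10000 in
/-- Instability of the disease-free equilibrium when `R₀ > 1`: the
characteristic polynomial of the Jacobian `J₀` has a positive real root `z`,
and this eigenvalue satisfies `|arg z| = 0 < α·π/2`. -/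
theorem dfe_unstable_of_R0_gt_one
    (a b c m ν γ r δ lh lv α : ℝ)
    (ha : 0 < a) (hb : 0 < b) (hc : 0 < c) (hm : 0 < m) (hν : 0 < ν)
    (hγ : 0 < γ) (hr : 0 < r) (hδ : 0 < δ) (hlh : 0 < lh) (hlv : 0 < lv)
    (hα : α ∈ Set.Ioc (0 : ℝ) 1)
    (A : ℝ) (hA : A = ν ^ α + r ^ α + lh ^ α + δ ^ α)
    (R₀ : ℝ) (hR₀ : R₀ = Real.sqrt (a ^ (2 * α) * b * m * c / (lv ^ α * A)))
    (J₀ : Matrix (Fin 5) (Fin 5) ℝ)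
    (hJ₀ : J₀ = !![-lh ^ α, ν ^ α + δ ^ α, γ ^ α, 0, -(a ^ α * b * m);
                   0, -A, 0, 0, a ^ α * b * m;
                   0, r ^ α, -(lh ^ α + γ ^ α), 0, 0;
                   0, -(a ^ α * c), 0, -lv ^ α, 0;
                   0, a ^ α * c, 0, 0, -lv ^ α])
    (hR : 1 < R₀) :
    ∃ z : ℝ, 0 < z ∧ J₀.charpoly.IsRoot z ∧
      |Complex.arg (z : ℂ)| = 0 ∧ 0 < α * Real.pi / 2 := by
  obtain ⟨hα0, hα1⟩ := hα
  have hAp : 0 < A := by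
    rw [hA]
    have := Real.rpow_pos_of_pos hν α
    have := Real.rpow_pos_of_pos hr α
    have := Real.rpow_pos_of_pos hlh α
    have := Real.rpow_pos_of_pos hδ α
    linarith
  have hKp : 0 < lv ^ α := Real.rpow_pos_of_pos hlv α
  have haα : 0 < a ^ α := Real.rpow_pos_of_pos ha α
  set P : ℝ := a ^ α * b * m with hP
  set Q : ℝ := a ^ α * c with hQ
  have hPp : 0 < P := by positivity
  have hQp : 0 < Q := by positivity
  have hPQ : P * Q = a ^ (2 * α) * b * m * c := by
    have h2 : a ^ (2 * α) = a ^ α * a ^ α := by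
      rw [two_mul, Real.rpow_add ha]
    rw [hP, hQ, h2]; ring
  -- From R₀ > 1 deduce A * lv^α < P * Q
  have hx : (0 : ℝ) ≤ a ^ (2 * α) * b * m * c / (lv ^ α * A) := by positivity
  have h1 : 1 < a ^ (2 * α) * b * m * c / (lv ^ α * A) := by
    have hs := Real.sq_sqrt hx
    rw [hR₀] at hR
    nlinarith [Real.sqrt_nonneg (a ^ (2 * α) * b * m * c / (lv ^ α * A))]
  have hCneg : A * lv ^ α < P * Q := by
    have := (one_lt_div (by positivity : (0:ℝ) < lv ^ α * A)).mp h1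
    rw [hPQ]; linarith
  set B : ℝ := A + lv ^ α with hB
  set C : ℝ := A * lv ^ α - P * Q with hC
  have hBpos : 0 < B := by positivity
  have hCneg' : C < 0 := by rw [hC]; linarith
  set D : ℝ := B ^ 2 - 4 * C with hD
  have hDpos : 0 < D := by nlinarith
  set s : ℝ := Real.sqrt D with hs
  have hs2 : s ^ 2 = D := Real.sq_sqrt hDpos.le
  have hsnn : 0 ≤ s := Real.sqrt_nonneg D
  have hzpos : 0 < (-B + s) / 2 := by nlinarith
  refine ⟨(-B + s) / 2, hzpos, ?_, ?_, ?_⟩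
  · -- it is a root of the characteristic polynomial
    set z : ℝ := (-B + s) / 2 with hz
    have hs2' : s ^ 2 = B ^ 2 - 4 * C := by rw [hs2, hD]
    have hquad : z ^ 2 + B * z + C = 0 := by
      rw [hz]; linear_combination hs2' / 4
    have heval := charpoly_eval_eq_det J₀ z
    have hmap : (Matrix.charmatrix J₀).map (Polynomial.evalRingHom z) =
        !![z + lh ^ α, -(ν ^ α + δ ^ α), -γ ^ α, 0, P;
           0, z + A, 0, 0, -P;
           0, -r ^ α, z + (lh ^ α + γ ^ α), 0, 0;
           0, Q, 0, z + lv ^ α, 0;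
           0, -Q, 0, 0, z + lv ^ α] := by
      subst hJ₀
      ext i j
      fin_cases i <;> fin_cases j <;>
        simp [Matrix.charmatrix_apply, Matrix.diagonal, hP, hQ, Matrix.vecHead, Matrix.vecTail] <;> ring
    have hdet :
        (!![z + lh ^ α, -(ν ^ α + δ ^ α), -γ ^ α, 0, P;
            0, z + A, 0, 0, -P;
            0, -r ^ α, z + (lh ^ α + γ ^ α), 0, 0;
            0, Q, 0, z + lv ^ α, 0;
            0, -Q, 0, 0, z + lv ^ α] : Matrix (Fin 5) (Fin 5) ℝ).det =
          (z + lh ^ α) * (z + (lh ^ α + γ ^ α)) * (z + lv ^ α) *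
            (z ^ 2 + (A + lv ^ α) * z + (A * lv ^ α - P * Q)) := by
      simp [Matrix.det_succ_row_zero, Fin.sum_univ_succ, Fin.succAbove, Fin.castSucc,
        Fin.castAdd, Fin.castLE, Matrix.cons_val_succ]
      ring
    rw [Polynomial.IsRoot, heval, hmap, hdet]
    rw [hB, hC] at hquad
    rw [hquad, mul_zero]
  · rw [Complex.arg_ofReal_of_nonneg hzpos.le, abs_zero]
  · have := Real.pi_pos
    positivity
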